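/- Let Q be a bounded subset of c₀, and for r ∈ ℕ let P_r : c₀ → c₀ be the projection P_r(x) = (x_0, x_1, …, x_r, 0, 0, …). Then the Hausdorff measure of noncompactness of Q satisfies χ(Q) = lim_{r→∞} sup_{x ∈ Q} ‖(I − P_r)(x)‖_∞. -/

import Mathlib

open Filter

/-- The Banach space `c₀` of real null sequences with the supremum norm, realized as a
(metric) subspace of `ℓ∞`. -/
abbrev c0Space : Type :=
  {x : lp (fun _ : ℕ => ℝ) (⊤ : ENNReal) // Tendsto (fun n => x n) atTop (nhds 0)}

/-- The Hausdorff measure of noncompactness: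
`χ(Q) = inf {ε > 0 : Q has a finite ε-net in X}`. -/
noncomputable def hausdorffMNC {X : Type*} [MetricSpace X] (Q : Set X) : ℝ :=
  sInf {ε : ℝ | 0 < ε ∧ ∃ S : Finset X, ∀ x ∈ Q, ∃ s ∈ S, dist x s < ε}

/-- The tail sup `sup_{n > r} |x_n|` of an element of `c₀`. -/
noncomputable def tail (r : ℕ) (x : c0Space) : ℝ := ⨆ n : ℕ, |x.1 (n + r + 1)|

lemma apply_le_norm (x : lp (fun _ : ℕ => ℝ) (⊤ : ENNReal)) (n : ℕ) : |x n| ≤ ‖x‖ := by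
  rw [← Real.norm_eq_abs]
  exact lp.norm_apply_le_norm ENNReal.top_ne_zero x n

lemma tail_bdd (r : ℕ) (x : c0Space) :
    BddAbove (Set.range fun n : ℕ => |x.1 (n + r + 1)|) :=
  ⟨‖x.1‖, by rintro t ⟨n, rfl⟩; exact apply_le_norm x.1 _⟩

lemma tail_nonneg (r : ℕ) (x : c0Space) : 0 ≤ tail r x :=
  le_trans (abs_nonneg _) (le_ciSup (tail_bdd r x) 0)

lemma tail_le_norm (r : ℕ) (x : c0Space) : tail r x ≤ ‖x.1‖ :=
  ciSup_le fun _ => apply_le_norm x.1 _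

lemma tail_succ_le (r : ℕ) (x : c0Space) : tail (r + 1) x ≤ tail r x := by
  refine ciSup_le fun n => ?_
  have h : n + (r + 1) + 1 = (n + 1) + r + 1 := by ring
  rw [h]
  exact le_ciSup (tail_bdd r x) (n + 1)

lemma tail_small (s : c0Space) {δ : ℝ} (hδ : 0 < δ) : ∃ N, ∀ r ≥ N, tail r s ≤ δ := by
  obtain ⟨N, hN⟩ := (Metric.tendsto_atTop.1 s.2) δ hδ
  refine ⟨N, fun r hr => ciSup_le fun n => ?_⟩
  have := hN (n + r + 1) (by omega)
  rw [Real.dist_eq, sub_zero] at this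
  exact this.le

noncomputable def embed (r : ℕ) (v : Fin (r + 1) → ℝ) : c0Space :=
  ⟨⟨fun n => if h : n < r + 1 then v ⟨n, h⟩ else 0,
    memℓp_infty ⟨‖v‖, by
      rintro t ⟨n, rfl⟩
      dsimp only
      split
      · exact norm_le_pi_norm v _
      · simp⟩⟩,
    tendsto_nhds_of_eventually_eq (by
      filter_upwards [eventually_ge_atTop (r + 1)] with n hn
      show (if h : n < r + 1 then v ⟨n, h⟩ else 0) = 0
      rw [dif_neg (by omega)])⟩

lemma embed_apply (r : ℕ) (v : Fin (r + 1) → ℝ) (n : ℕ) :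
    (embed r v).1 n = if h : n < r + 1 then v ⟨n, h⟩ else 0 := rfl

lemma embed_lipschitz (r : ℕ) : LipschitzWith 1 (embed r) := by
  refine LipschitzWith.of_dist_le_mul fun v w => ?_
  rw [NNReal.coe_one, one_mul, Subtype.dist_eq, dist_eq_norm]
  rw [lp.norm_eq_ciSup]
  refine ciSup_le fun n => ?_
  have h1 : ((embed r v).1 - (embed r w).1 : lp (fun _ : ℕ => ℝ) ⊤) n
      = (embed r v).1 n - (embed r w).1 n := by
    rw [lp.coeFn_sub]; rfl
  rw [h1, embed_apply, embed_apply, Real.norm_eq_abs]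
  split
  · rw [← Real.norm_eq_abs, ← dist_eq_norm]
    exact dist_le_pi_dist v w _
  · simpa using dist_nonneg

noncomputable def proj (r : ℕ) (x : c0Space) : c0Space :=
  embed r (fun i => x.1 i)

lemma dist_proj (r : ℕ) (x : c0Space) : dist x (proj r x) = tail r x := by
  rw [Subtype.dist_eq, dist_eq_norm]
  have hco : ∀ n : ℕ, (x.1 - (proj r x).1 : lp (fun _ : ℕ => ℝ) ⊤) n
      = if n < r + 1 then 0 else x.1 n := by
    intro n
    have h1 : (x.1 - (proj r x).1 : lp (fun _ : ℕ => ℝ) ⊤) n = x.1 n - (proj r x).1 n := by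
      rw [lp.coeFn_sub]; rfl
    rw [h1, proj, embed_apply]
    split
    · simp
    · simp
  refine le_antisymm ?_ ?_
  · rw [lp.norm_eq_ciSup]
    refine ciSup_le fun n => ?_
    rw [hco n]
    split
    · simpa using tail_nonneg r x
    · rename_i hn
      rw [Real.norm_eq_abs]
      have h2 : n = (n - (r + 1)) + r + 1 := by omega
      rw [h2]
      exact le_ciSup (tail_bdd r x) (n - (r + 1))
  · refine ciSup_le fun m => ?_
    have h3 := apply_le_norm (x.1 - (proj r x).1) (m + r + 1)
    rwa [hco, if_neg (by omega)] at h3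

/-- For a bounded `Q ⊆ c₀` and the projections `P_r(x) = (x_0, …, x_r, 0, 0, …)`,
one has `χ(Q) = lim_r sup_{x ∈ Q} ‖(I − P_r)(x)‖_∞`; note
`‖(I − P_r)(x)‖_∞ = sup_{n > r} |x_n|`. -/
theorem chi_c0_eq_lim (Q : Set c0Space) (hQ : Bornology.IsBounded Q) :
    Tendsto (fun r : ℕ =>
        sSup {t : ℝ | ∃ x ∈ Q, t = ⨆ n : ℕ, |x.1 (n + r + 1)|})
      atTop (nhds (hausdorffMNC Q)) := by
  show Tendsto (fun r : ℕ => sSup {t : ℝ | ∃ x ∈ Q, t = tail r x}) atTop (nhds (hausdorffMNC Q))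
  rcases Q.eq_empty_or_nonempty with hQe | ⟨x₀, hx₀⟩
  · subst hQe
    have hs : (fun r : ℕ => sSup {t : ℝ | ∃ x ∈ (∅ : Set c0Space), t = tail r x})
        = fun _ => (0 : ℝ) := by
      funext r
      have : {t : ℝ | ∃ x ∈ (∅ : Set c0Space), t = tail r x} = ∅ :=
        Set.eq_empty_iff_forall_notMem.2 (by rintro t ⟨x, hx, -⟩; exact hx)
      rw [this, Real.sSup_empty]
    have hmnc : hausdorffMNC (∅ : Set c0Space) = 0 := by
      unfold hausdorffMNC
      have h : {ε : ℝ | 0 < ε ∧ ∃ S : Finset c0Space,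
          ∀ x ∈ (∅ : Set c0Space), ∃ s ∈ S, dist x s < ε} = Set.Ioi 0 := by
        ext ε
        exact ⟨fun h => h.1, fun h => ⟨h, ∅, fun x hx => absurd hx (Set.notMem_empty x)⟩⟩
      rw [h, csInf_Ioi]
    rw [hs, hmnc]
    exact tendsto_const_nhds
  · obtain ⟨R, hR⟩ := hQ.subset_closedBall x₀
    have hR0 : 0 ≤ R := by
      have := hR hx₀
      simpa [Metric.mem_closedBall] using le_trans dist_nonneg this
    set C := ‖x₀.1‖ + R with hCdef
    have hC0 : 0 ≤ C := add_nonneg (norm_nonneg _) hR0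
    have hxC : ∀ x ∈ Q, ‖x.1‖ ≤ C := by
      intro x hx
      have h1 : dist x x₀ ≤ R := by simpa [Metric.mem_closedBall] using hR hx
      have h2 : ‖x.1 - x₀.1‖ ≤ R := by rwa [Subtype.dist_eq, dist_eq_norm] at h1
      calc ‖x.1‖ = ‖x.1 - x₀.1 + x₀.1‖ := by rw [sub_add_cancel]
        _ ≤ ‖x.1 - x₀.1‖ + ‖x₀.1‖ := norm_add_le _ _
        _ ≤ R + ‖x₀.1‖ := add_le_add h2 le_rfl
        _ = C := by rw [hCdef]; ring
    set T : ℕ → Set ℝ := fun r => {t : ℝ | ∃ x ∈ Q, t = tail r x} with hTdef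
    set f : ℕ → ℝ := fun r => sSup (T r) with hfdef
    have hbddT : ∀ r, BddAbove (T r) := by
      intro r
      refine ⟨C, ?_⟩
      rintro t ⟨x, hx, rfl⟩
      exact (tail_le_norm r x).trans (hxC x hx)
    have hf0 : ∀ r, 0 ≤ f r := by
      intro r
      refine Real.sSup_nonneg ?_
      rintro t ⟨x, hx, rfl⟩
      exact tail_nonneg r x
    have hanti : Antitone f := by
      refine antitone_nat_of_succ_le fun r => ?_
      refine Real.sSup_le ?_ (hf0 r)
      rintro t ⟨x, hx, rfl⟩
      exact (tail_succ_le r x).trans (le_csSup (hbddT r) ⟨x, hx, rfl⟩)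
    have hbb : BddBelow (Set.range f) := ⟨0, by rintro t ⟨r, rfl⟩; exact hf0 r⟩
    have htend : Tendsto f atTop (nhds (⨅ r, f r)) := tendsto_atTop_ciInf hanti hbb
    have hkey : hausdorffMNC Q = ⨅ r, f r := by
      refine le_antisymm ?_ ?_
      · -- χ ≤ inf f
        refine le_ciInf fun r => ?_
        refine le_of_forall_pos_le_add fun δ hδ => ?_
        refine csInf_le ⟨0, fun ε hε => hε.1.le⟩ ?_
        refine ⟨lt_add_of_le_of_pos (hf0 r) hδ, ?_⟩
        have hcpt : IsCompact (embed r '' Metric.closedBall (0 : Fin (r + 1) → ℝ) C) :=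
          (isCompact_closedBall (0 : Fin (r + 1) → ℝ) C).image (embed_lipschitz r).continuous
        obtain ⟨t, _, htfin, hcov⟩ := hcpt.finite_cover_balls hδ
        refine ⟨htfin.toFinset, fun x hx => ?_⟩
        have hproj : proj r x ∈ embed r '' Metric.closedBall (0 : Fin (r + 1) → ℝ) C := by
          refine ⟨fun i => x.1 i, ?_, rfl⟩
          rw [Metric.mem_closedBall, dist_zero_right]
          refine (pi_norm_le_iff_of_nonneg hC0).2 fun i => ?_
          exact (apply_le_norm x.1 i).trans (hxC x hx)
        obtain ⟨y, hyt, hy⟩ := Set.mem_iUnion₂.1 (hcov hproj)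
        refine ⟨y, htfin.mem_toFinset.2 hyt, ?_⟩
        calc dist x y ≤ dist x (proj r x) + dist (proj r x) y := dist_triangle _ _ _
          _ < f r + δ := by
              refine add_lt_add_of_le_of_lt ?_ (Metric.mem_ball.1 hy)
              rw [dist_proj]
              exact le_csSup (hbddT r) ⟨x, hx, rfl⟩
      · -- inf f ≤ χ
        refine le_csInf ⟨C + 1, ?_, ?_⟩ ?_
        · positivity
        · refine ⟨{x₀}, fun x hx => ⟨x₀, Finset.mem_singleton_self x₀, ?_⟩⟩
          have h1 : dist x x₀ ≤ R := by simpa [Metric.mem_closedBall] using hR hx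
          have h2 : R ≤ C := le_add_of_nonneg_left (norm_nonneg _)
          linarith
        · rintro ε ⟨hε, S, hS⟩
          refine le_of_forall_pos_le_add fun δ hδ => ?_
          have key : ∀ s : c0Space, ∃ N, ∀ r ≥ N, tail r s ≤ δ := fun s => tail_small s hδ
          choose Nf hNf using key
          set R₀ := S.sup Nf with hR₀
          calc ⨅ r, f r ≤ f R₀ := ciInf_le hbb R₀
            _ ≤ ε + δ := by
                refine Real.sSup_le ?_ (by positivity)
                rintro t ⟨x, hx, rfl⟩
                obtain ⟨s, hsS, hds⟩ := hS x hx
                have hdist : ‖x.1 - s.1‖ = dist x s := by rw [Subtype.dist_eq, dist_eq_norm]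
                refine ciSup_le fun n => ?_
                have h1 : |x.1 (n + R₀ + 1)| ≤ |x.1 (n + R₀ + 1) - s.1 (n + R₀ + 1)|
                    + |s.1 (n + R₀ + 1)| := by
                  calc |x.1 (n + R₀ + 1)|
                      = |(x.1 (n + R₀ + 1) - s.1 (n + R₀ + 1)) + s.1 (n + R₀ + 1)| := by rw [sub_add_cancel]
                    _ ≤ _ := abs_add_le _ _
                have h2 : |x.1 (n + R₀ + 1) - s.1 (n + R₀ + 1)| ≤ dist x s := by
                  have h3 := apply_le_norm (x.1 - s.1) (n + R₀ + 1)
                  have h4 : (x.1 - s.1 : lp (fun _ : ℕ => ℝ) ⊤) (n + R₀ + 1)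
                      = x.1 (n + R₀ + 1) - s.1 (n + R₀ + 1) := by rw [lp.coeFn_sub]; rfl
                  rw [h4, hdist] at h3
                  exact h3
                have h5 : |s.1 (n + R₀ + 1)| ≤ tail R₀ s := le_ciSup (tail_bdd R₀ s) n
                have h6 : tail R₀ s ≤ δ := hNf s R₀ (Finset.le_sup hsS)
                linarith
    rw [hkey]
    exact htend
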